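/- Let n ≥ 3, let P(x₁,…,xₙ) = Σᵢ xᵢ² + Σ_{i<j} α_{ij} xᵢ xⱼ with indeterminate coefficients α_{ij}, and define Fᵢ replacing the i-th coordinate xᵢ by (P|_{xᵢ=0})/xᵢ. Then for any finite sequence of indices i₁,…,i_m, the composition F_{i₁} ∘ ⋯ ∘ F_{i_m} is given coordinatewise by Laurent polynomials in x₁,…,xₙ with coefficients in ℤ[α_{ij} : i<j]. -/

import Mathlib

open MvPolynomial Function Finset

namespace QFLaurent

noncomputable section

abbrev PI (n : ℕ) : Type := {p : Fin n × Fin n // p.1 < p.2}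
abbrev Ply (n : ℕ) : Type := MvPolynomial (Fin n ⊕ PI n) ℤ

def Mg (n : ℕ) : Submonoid (Ply n) :=
  Submonoid.closure (Set.range fun i : Fin n => (X (Sum.inl i) : Ply n))

abbrev Bl (n : ℕ) : Type := Localization (Mg n)

lemma Mg_le_nzd (n : ℕ) : Mg n ≤ nonZeroDivisors (Ply n) := by
  rw [Mg, Submonoid.closure_le]
  rintro _ ⟨i, rfl⟩
  exact mem_nonZeroDivisors_of_ne_zero (X_ne_zero _)

instance (n : ℕ) : IsDomain (Bl n) :=
  IsLocalization.isDomain_of_le_nonZeroDivisors _ (Mg_le_nzd n)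

section Generic

variable {n : ℕ} {B : Type*} [CommRing B]

/-- The quadratic form `Σ b_j^2 + Σ_{p} A_p b_{p₁} b_{p₂}`. -/
def PB (A : PI n → B) (b : Fin n → B) : B :=
  (∑ j, b j ^ 2) + ∑ p : PI n, A p * b p.1.1 * b p.1.2

/-- The linear form `Σ_{j ≠ i} A_{ij} b_j` (coefficient of `b_i` in the cross terms). -/
def LB (A : PI n → B) (b : Fin n → B) (i : Fin n) : B :=
  (∑ p : PI n, if p.1.1 = i then A p * b p.1.2 else 0)
    + ∑ p : PI n, if p.1.2 = i then A p * b p.1.1 else 0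

lemma PB_update (A : PI n → B) (b : Fin n → B) (i : Fin n) (t : B) :
    PB A (Function.update b i t)
      = t * (t + LB A b i) + PB A (Function.update b i 0) := by
  classical
  have h1 : ∀ s : B, (∑ j, Function.update b i s j ^ 2)
      = s ^ 2 - b i ^ 2 + ∑ j, b j ^ 2 := by
    intro s
    have key : ∀ j : Fin n, Function.update b i s j ^ 2
        = (if j = i then s ^ 2 - b j ^ 2 else 0) + b j ^ 2 := by
      intro j
      rw [Function.update_apply]
      by_cases h : j = i <;> simp [h] <;> ring
    rw [Finset.sum_congr rfl fun j _ => key j, Finset.sum_add_distrib,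
      Finset.sum_ite_eq' Finset.univ i]
    simp
  have h2 : ∀ s : B,
      (∑ p : PI n, A p * Function.update b i s p.1.1 * Function.update b i s p.1.2)
      = s * (LB A b i)
        - (∑ p : PI n, ((if p.1.1 = i then A p * b p.1.1 * b p.1.2 else 0)
          + (if p.1.2 = i then A p * b p.1.1 * b p.1.2 else 0)))
        + ∑ p : PI n, A p * b p.1.1 * b p.1.2 := by
    intro s
    have key : ∀ p : PI n,
        A p * Function.update b i s p.1.1 * Function.update b i s p.1.2
        = s * ((if p.1.1 = i then A p * b p.1.2 else 0)
              + (if p.1.2 = i then A p * b p.1.1 else 0))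
          - ((if p.1.1 = i then A p * b p.1.1 * b p.1.2 else 0)
            + (if p.1.2 = i then A p * b p.1.1 * b p.1.2 else 0))
          + A p * b p.1.1 * b p.1.2 := by
      intro p
      have hne : p.1.1 ≠ p.1.2 := ne_of_lt p.2
      rw [Function.update_apply, Function.update_apply]
      by_cases hu : p.1.1 = i <;> by_cases hv : p.1.2 = i
      · exact absurd (hu.trans hv.symm) hne
      · simp only [hu, hv, if_pos, if_neg, if_true, if_false]; ring
      · simp only [hu, hv, if_pos, if_neg, if_true, if_false]; ring
      · simp only [hu, hv, if_false]; ring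
    rw [Finset.sum_congr rfl fun p _ => key p, Finset.sum_add_distrib,
      Finset.sum_sub_distrib, ← Finset.mul_sum, Finset.sum_add_distrib, LB]
  simp only [PB]
  rw [h1 t, h1 0, h2 t, h2 0]
  ring

end Generic

end

end QFLaurent

open QFLaurent in
set_option maxHeartbeats 2000000 in
theorem quadratic_form_exchanges_laurent
    (n : ℕ) (hn : 3 ≤ n)
    (F : Type*) [Field F]
    [Algebra (MvPolynomial (Fin n ⊕ {p : Fin n × Fin n // p.1 < p.2}) ℤ) F]
    [IsFractionRing (MvPolynomial (Fin n ⊕ {p : Fin n × Fin n // p.1 < p.2}) ℤ) F]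
    (x : Fin n → F) (a : {p : Fin n × Fin n // p.1 < p.2} → F)
    (hx : ∀ i, x i = algebraMap
      (MvPolynomial (Fin n ⊕ {p : Fin n × Fin n // p.1 < p.2}) ℤ) F (X (Sum.inl i)))
    (ha : ∀ p, a p = algebraMap
      (MvPolynomial (Fin n ⊕ {p : Fin n × Fin n // p.1 < p.2}) ℤ) F (X (Sum.inr p)))
    (P : (Fin n → F) → F)
    (hP : ∀ v : Fin n → F,
      P v = (∑ i, v i ^ 2) + ∑ p : {p : Fin n × Fin n // p.1 < p.2},
        a p * v p.1.1 * v p.1.2)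
    (step : Fin n → (Fin n → F) → (Fin n → F))
    (hstep : ∀ (i : Fin n) (v : Fin n → F),
      step i v = Function.update v i (P (Function.update v i 0) / v i)) :
    ∀ (l : List (Fin n)) (j : Fin n),
      (l.foldr step x) j ∈ Algebra.adjoin ℤ
        (Set.range x ∪ Set.range (fun i => (x i)⁻¹) ∪ Set.range a) := by
  classical
  set Rad : Subalgebra ℤ F :=
    Algebra.adjoin ℤ (Set.range x ∪ Set.range (fun i => (x i)⁻¹) ∪ Set.range a) with hRad
  have hinj : Function.Injective (algebraMap (Ply n) F) := IsFractionRing.injective _ _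
  -- the images of the monoid `Mg n` in `F` are units
  have hUF : ∀ y : Mg n, IsUnit (algebraMap (Ply n) F y) := by
    rintro ⟨y, hy⟩
    refine Submonoid.closure_induction ?_ ?_ ?_ hy
    · rintro _ ⟨i, rfl⟩
      refine isUnit_iff_ne_zero.mpr fun h0 => X_ne_zero (R := ℤ) (Sum.inl i : Fin n ⊕ PI n) ?_
      exact hinj (by simpa using h0)
    · simpa using isUnit_one
    · intro z w _ _ hz hw
      rw [map_mul]; exact hz.mul hw
  -- evaluation of everything at 1
  have hUQ : ∀ y : Mg n,
      IsUnit ((eval₂Hom (Int.castRingHom ℚ) fun _ : Fin n ⊕ PI n => (1 : ℚ)) y) := by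
    rintro ⟨y, hy⟩
    refine Submonoid.closure_induction ?_ ?_ ?_ hy
    · rintro _ ⟨i, rfl⟩; simp
    · simpa using isUnit_one
    · intro z w _ _ hz hw
      rw [map_mul]; exact hz.mul hw
  let ι : Bl n →+* F := IsLocalization.lift hUF
  let ψ : Bl n →+* ℚ := IsLocalization.lift hUQ
  have hιalg : ∀ q : Ply n, ι (algebraMap (Ply n) (Bl n) q) = algebraMap (Ply n) F q :=
    fun q => IsLocalization.lift_eq hUF q
  have hψalg : ∀ q : Ply n, ψ (algebraMap (Ply n) (Bl n) q)
      = (eval₂Hom (Int.castRingHom ℚ) fun _ => (1 : ℚ)) q :=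
    fun q => IsLocalization.lift_eq hUQ q
  -- ι vanishes only at 0
  have hι0 : ∀ bb : Bl n, ι bb = 0 → bb = 0 := by
    intro bb h0
    obtain ⟨⟨p, s⟩, rfl⟩ := IsLocalization.mk'_surjective (Mg n) bb
    have h1 : ι (IsLocalization.mk' (Bl n) p s) * algebraMap (Ply n) F s.1
        = algebraMap (Ply n) F p := by
      rw [← hιalg s.1, ← map_mul, IsLocalization.mk'_spec, hιalg]
    rw [h0, zero_mul] at h1
    have hp0 : p = 0 := hinj (by rw [← h1, map_zero])
    dsimp only; rw [hp0, IsLocalization.mk'_zero]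
  -- every element of `Bl n` maps into the Laurent subalgebra
  have hpolymem : ∀ q : Ply n, algebraMap (Ply n) F q ∈ Rad := by
    intro q
    refine MvPolynomial.induction_on (motive := fun q => algebraMap (Ply n) F q ∈ Rad) q ?_ ?_ ?_
    · intro z
      rw [eq_intCast (MvPolynomial.C : ℤ →+* Ply n) z, map_intCast]
      exact intCast_mem Rad z
    · intro p q hp hq; rw [map_add]; exact add_mem hp hq
    · intro p s hp
      rw [map_mul]
      refine mul_mem hp ?_
      cases s with
      | inl i =>
        rw [← hx i]
        exact Algebra.subset_adjoin (Or.inl (Or.inl ⟨i, rfl⟩))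
      | inr p =>
        rw [← ha p]
        exact Algebra.subset_adjoin (Or.inr ⟨p, rfl⟩)
  have hinvmem : ∀ s : Ply n, s ∈ Mg n → (algebraMap (Ply n) F s)⁻¹ ∈ Rad := by
    intro s hs
    refine Submonoid.closure_induction ?_ ?_ ?_ hs
    · rintro _ ⟨i, rfl⟩
      rw [← hx i]
      exact Algebra.subset_adjoin (Or.inl (Or.inr ⟨i, rfl⟩))
    · simp only [map_one, inv_one]; exact one_mem Rad
    · intro z w _ _ hz hw
      rw [map_mul, mul_inv]
      exact mul_mem hz hw
  have hmem : ∀ bb : Bl n, ι bb ∈ Rad := by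
    intro bb
    obtain ⟨⟨p, s⟩, rfl⟩ := IsLocalization.mk'_surjective (Mg n) bb
    have h1 : ι (IsLocalization.mk' (Bl n) p s) * algebraMap (Ply n) F s.1
        = algebraMap (Ply n) F p := by
      rw [← hιalg s.1, ← map_mul, IsLocalization.mk'_spec, hιalg]
    have hs0 : algebraMap (Ply n) F s.1 ≠ 0 := (hUF s).ne_zero
    have h2 : ι (IsLocalization.mk' (Bl n) p s)
        = algebraMap (Ply n) F p * (algebraMap (Ply n) F s.1)⁻¹ :=
      (eq_mul_inv_iff_mul_eq₀ hs0).mpr h1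
    rw [h2]
    exact mul_mem (hpolymem p) (hinvmem s.1 s.2)
  -- the coefficients in `Bl n`
  let AB : PI n → Bl n := fun p => algebraMap (Ply n) (Bl n) (X (Sum.inr p))
  have hιA : ∀ p : PI n, ι (AB p) = a p :=
    fun p => (hιalg (X (Sum.inr p))).trans (ha p).symm
  have hψA : ∀ p : PI n, ψ (AB p) = 1 :=
    fun p => (hψalg (X (Sum.inr p))).trans (eval₂Hom_X' _ _ _)
  have hιPB : ∀ c : Fin n → Bl n, ι (PB AB c) = P fun j => ι (c j) := by
    intro c
    rw [hP]
    simp only [PB, map_add, map_sum, map_mul, map_pow, hιA]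
  have hψPB : ∀ c : Fin n → Bl n,
      ψ (PB AB c) = (∑ j, ψ (c j) ^ 2) + ∑ p : PI n, ψ (c p.1.1) * ψ (c p.1.2) := by
    intro c
    simp only [PB, map_add, map_sum, map_mul, map_pow, hψA, one_mul]
  -- the key invariant, carried through the mutation sequence
  have key : ∀ l : List (Fin n), ∃ b : Fin n → Bl n,
      (∀ j, ι (b j) = (l.foldr step x) j) ∧ (∀ j, 0 < ψ (b j)) ∧
      (∀ k, b k ∣ PB AB (Function.update b k 0)) ∧
      ∃ Cq : Bl n, PB AB b = Cq * ∏ j, b j := by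
    intro l
    induction l with
    | nil =>
      refine ⟨fun j => algebraMap (Ply n) (Bl n) (X (Sum.inl j)), ?_, ?_, ?_, ?_⟩
      · intro j
        rw [List.foldr_nil, hιalg, ← hx j]
      · intro j
        rw [hψalg]; simp
      · intro k
        exact (IsLocalization.map_units (Bl n)
          (⟨X (Sum.inl k), Submonoid.subset_closure ⟨k, rfl⟩⟩ : Mg n)).dvd
      · have hu : IsUnit (algebraMap (Ply n) (Bl n) (∏ j, X (Sum.inl j))) :=
          IsLocalization.map_units (Bl n)
            (⟨∏ j, X (Sum.inl j), prod_mem fun j _ => Submonoid.subset_closure ⟨j, rfl⟩⟩ : Mg n)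
        refine ⟨PB AB (fun j => algebraMap (Ply n) (Bl n) (X (Sum.inl j))) * ↑hu.unit⁻¹, ?_⟩
        rw [← map_prod, mul_assoc, hu.val_inv_mul, mul_one]
    | cons i l ih =>
      obtain ⟨b, hb0, hb1, hb2, Cq, hb3⟩ := ih
      obtain ⟨w, hw⟩ := hb2 i
      have hbine : b i ≠ 0 := by
        intro h
        have := hb1 i
        rw [h, map_zero] at this
        exact lt_irrefl 0 this
      have hvine : (l.foldr step x) i ≠ 0 := by
        rw [← hb0 i]
        intro h
        exact hbine (hι0 _ h)
      -- the conserved-quantity identity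
      have hKid : PB AB b = b i * (b i + LB AB b i + w) := by
        have h := PB_update AB b i (b i)
        rw [Function.update_eq_self] at h
        rw [h, hw]; ring
      have hK : b i + LB AB b i + w = Cq * ∏ j ∈ Finset.univ.erase i, b j := by
        apply mul_left_cancel₀ hbine
        rw [← hKid, hb3, ← Finset.mul_prod_erase Finset.univ b (Finset.mem_univ i)]
        ring
      refine ⟨Function.update b i w, ?_, ?_, ?_, Cq, ?_⟩
      · -- correspondence with the actual mutation in F
        intro j
        rw [List.foldr_cons, hstep i (l.foldr step x), Function.update_apply,
          Function.update_apply]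
        split_ifs with h
        · rw [eq_div_iff hvine]
          have h1 : ι (b i * w) = P (Function.update (l.foldr step x) i 0) := by
            rw [← hw, hιPB]
            congr 1
            funext j'
            rw [Function.update_apply, Function.update_apply]
            split_ifs with h'
            · exact map_zero ι
            · exact hb0 j'
          rw [← hb0 i, ← map_mul, mul_comm w (b i)]
          exact h1
        · exact hb0 j
      · -- positivity under ψ
        intro j
        rw [Function.update_apply]
        split_ifs with h
        · have hnn : ∀ j', 0 ≤ ψ (Function.update b i 0 j') := by
            intro j'
            rw [Function.update_apply]
            split_ifs with h'
            · rw [map_zero]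
            · exact le_of_lt (hb1 j')
          have hpos : 0 < ψ (PB AB (Function.update b i 0)) := by
            rw [hψPB]
            apply add_pos_of_pos_of_nonneg
            · refine Finset.sum_pos' (fun j' _ => sq_nonneg _) ?_
              have hnt : Nontrivial (Fin n) :=
                ⟨⟨0, by omega⟩, ⟨1, by omega⟩, by simp [Fin.ext_iff]⟩
              obtain ⟨j0, hj0⟩ := exists_ne i
              refine ⟨j0, Finset.mem_univ _, ?_⟩
              rw [Function.update_of_ne hj0]
              exact pow_pos (hb1 j0) 2
            · exact Finset.sum_nonneg fun p _ => mul_nonneg (hnn _) (hnn _)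
          have hmul : 0 < ψ (b i) * ψ w := by
            rw [← map_mul, ← hw]; exact hpos
          rcases mul_pos_iff.mp hmul with ⟨_, h2⟩ | ⟨h1, _⟩
          · exact h2
          · exact absurd (hb1 i) (not_lt.mpr (le_of_lt h1))
        · exact hb1 j
      · -- divisibility
        intro k
        by_cases hk : k = i
        · subst hk
          rw [Function.update_self, Function.update_idem, hw]
          exact dvd_mul_left w (b k)
        · have hik : i ≠ k := fun h => hk h.symm
          rw [Function.update_of_ne hk, Function.update_comm hik]
          set c : Fin n → Bl n := Function.update b k 0 with hc
          rw [PB_update AB c i w]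
          have hci : c i = b i := Function.update_of_ne hik 0 b
          have hPC : PB AB (Function.update c i 0)
              = PB AB c - c i * (c i + LB AB c i) := by
            have h := PB_update AB c i (c i)
            rw [Function.update_eq_self] at h
            rw [h]; ring
          rw [hPC, hci]
          have hdvd2 : b k ∣ LB AB b i - LB AB c i := by
            rw [LB, LB]
            have hre : ∀ f g f' g' : Bl n, (f + g) - (f' + g') = (f - f') + (g - g') := by
              intros; ring
            rw [hre]
            refine dvd_add ?_ ?_
            · rw [← Finset.sum_sub_distrib]
              refine Finset.dvd_sum ?_
              intro p _
              by_cases h1 : p.1.1 = i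
              · rw [if_pos h1, if_pos h1, hc, Function.update_apply]
                by_cases h2 : p.1.2 = k
                · rw [if_pos h2, mul_zero, sub_zero, h2]
                  exact dvd_mul_left _ _
                · rw [if_neg h2, sub_self]
                  exact dvd_zero _
              · rw [if_neg h1, if_neg h1, sub_self]
                exact dvd_zero _
            · rw [← Finset.sum_sub_distrib]
              refine Finset.dvd_sum ?_
              intro p _
              by_cases h1 : p.1.2 = i
              · rw [if_pos h1, if_pos h1, hc, Function.update_apply]
                by_cases h2 : p.1.1 = k
                · rw [if_pos h2, mul_zero, sub_zero, h2]
                  exact dvd_mul_left _ _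
                · rw [if_neg h2, sub_self]
                  exact dvd_zero _
              · rw [if_neg h1, if_neg h1, sub_self]
                exact dvd_zero _
          have hdvd3 : b k ∣ b i + LB AB c i + w := by
            have hre : b i + LB AB c i + w
                = (b i + LB AB b i + w) - (LB AB b i - LB AB c i) := by ring
            rw [hre, hK]
            refine dvd_sub ?_ hdvd2
            exact Dvd.dvd.mul_left
              (Finset.dvd_prod_of_mem b (Finset.mem_erase.mpr ⟨hk, Finset.mem_univ k⟩)) Cq
          have hre2 : w * (w + LB AB c i) + (PB AB c - b i * (b i + LB AB c i))
              = (w - b i) * (b i + LB AB c i + w) + PB AB c := by ring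
          rw [hre2]
          exact dvd_add (hdvd3.mul_left _) (hb2 k)
      · -- the conserved quantity identity for the new cluster
        calc PB AB (Function.update b i w)
            = w * (w + LB AB b i) + PB AB (Function.update b i 0) := PB_update AB b i w
          _ = (b i + LB AB b i + w) * w := by rw [hw]; ring
          _ = (Cq * ∏ j ∈ Finset.univ.erase i, b j) * w := by rw [hK]
          _ = Cq * ∏ j, Function.update b i w j := by
              rw [Finset.prod_update_of_mem (Finset.mem_univ i), Finset.erase_eq]
              ring
  intro l j
  obtain ⟨b, hb0, -, -, -⟩ := key l
  rw [← hb0 j]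
  exact hmem (b j)
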